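/- Let T > 0 and let S_A, S_B be real numbers with 1 + S_A ≠ 0 and 1 + S_B ≠ 0. Set S_BA = (S_B − S_A)/(1 + S_A) and ΔT_0 = (S_A − S_B)·T/(1 + S_B). Then the required inter-transmission time satisfies T̃ = T + ΔT_0 = T − (S_BA/(1 + S_BA))·T = T/(1 + S_BA). -/

import Mathlib

/-- the cloaking inter-transmission time T̃ = T + ΔT₀ equals
T − (S_BA/(1+S_BA))·T = T/(1+S_BA). -/
theorem cloaking_intertransmission_time (T S_A S_B : ℝ) (hT : 0 < T)
    (hA : 1 + S_A ≠ 0) (hB : 1 + S_B ≠ 0)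
    (S_BA ΔT₀ : ℝ) (hBA : S_BA = (S_B - S_A) / (1 + S_A))
    (hΔT₀ : ΔT₀ = (S_A - S_B) * T / (1 + S_B)) :
    T + ΔT₀ = T - (S_BA / (1 + S_BA)) * T ∧ T + ΔT₀ = T / (1 + S_BA) := by
  have h1 : 1 + S_BA = (1 + S_B) / (1 + S_A) := by
    rw [hBA]; field_simp; ring
  have h2 : 1 + S_BA ≠ 0 := h1 ▸ div_ne_zero hB hA
  constructor
  · rw [hΔT₀, h1, hBA]; field_simp; ring
  · rw [hΔT₀, h1]; field_simp; ring
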